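/- Let X be a Polish topological vector space and let c(x₁, x₂) = h(x₁ − x₂) be a translation invariant cost function on X, where h : X → [0,∞]. Then for any probability measures μ, ν, and κ on X, the optimal transport costs satisfy both T_c(μ * κ, ν * κ) ≤ T_c(μ, ν) and T_c(μ, μ * κ) ≤ ∫ h dκ. -/

import Mathlib

open MeasureTheory ENNReal Filter Topology

/-- The optimal transport cost between two measures `μ` and `ν` on a space `Z`
with base cost `c`. -/
noncomputable def otCost {Z : Type*} [MeasurableSpace Z]
    (c : Z → Z → ℝ≥0∞) (μ ν : Measure Z) : ℝ≥0∞ :=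
  ⨅ (π : Measure (Z × Z)) (_ : π.map Prod.fst = μ ∧ π.map Prod.snd = ν),
    ∫⁻ p, c p.1 p.2 ∂π

/-- The convolution of two measures on a topological vector space:
the law of the sum of independent random variables with laws `μ` and `κ`. -/
noncomputable def mconv {Z : Type*} [MeasurableSpace Z] [Add Z]
    (μ κ : Measure Z) : Measure Z :=
  (μ.prod κ).map fun q => q.1 + q.2

/-- For a translation invariant cost `c(x₁, x₂) = h(x₁ − x₂)` on a
Polish topological vector space `X` and probability measures `μ`, `ν`, `κ` on `X`:
`T_c(μ * κ, ν * κ) ≤ T_c(μ, ν)` and `T_c(μ, μ * κ) ≤ ∫ h dκ`. -/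
theorem otCost_conv_le
    {X : Type*} [AddCommGroup X] [Module ℝ X] [TopologicalSpace X]
    [IsTopologicalAddGroup X] [ContinuousSMul ℝ X] [PolishSpace X]
    [MeasurableSpace X] [BorelSpace X]
    (h : X → ℝ≥0∞)
    (c : X → X → ℝ≥0∞) (hch : ∀ x₁ x₂, c x₁ x₂ = h (x₁ - x₂))
    (hc_lsc : LowerSemicontinuous (Function.uncurry c))
    (hc_symm : ∀ x₁ x₂, c x₁ x₂ = c x₂ x₁)
    (hc_diag : ∀ x, c x x = 0)
    (μ ν κ : Measure X)
    [IsProbabilityMeasure μ] [IsProbabilityMeasure ν] [IsProbabilityMeasure κ] :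
    otCost c (mconv μ κ) (mconv ν κ) ≤ otCost c μ ν ∧
      otCost c μ (mconv μ κ) ≤ ∫⁻ x, h x ∂κ := by
  have mc : Measurable (Function.uncurry c) := hc_lsc.measurable
  have mc2 : Measurable fun p : X × X => c p.1 p.2 := mc
  have mh : Measurable h := by
    have : h = fun x => c x 0 := by
      funext x; rw [hch]; simp
    rw [this]
    exact mc2.comp (measurable_id.prodMk measurable_const)
  have hinv : ∀ x y z : X, c (x + z) (y + z) = c x y := by
    intro x y z
    rw [hch, hch]
    congr 1
    abel
  have hneg : ∀ z : X, h (-z) = h z := by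
    intro z
    have h1 := hch 0 z
    have h2 := hch z 0
    rw [hc_symm 0 z] at h1
    rw [h2] at h1
    simpa using h1.symm
  constructor
  · -- part 1
    rw [otCost]
    refine le_iInf₂ fun π hπ => ?_
    obtain ⟨hπ1, hπ2⟩ := hπ
    have hπprob : IsProbabilityMeasure π := by
      constructor
      rw [← Set.preimage_univ (f := @Prod.fst X X),
        ← Measure.map_apply measurable_fst MeasurableSet.univ, hπ1]
      exact measure_univ
    set f : (X × X) × X → X × X := fun q => (q.1.1 + q.2, q.1.2 + q.2) with hf
    have mf : Measurable f :=
      (measurable_fst.fst.add measurable_snd).prodMk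
        (measurable_fst.snd.add measurable_snd)
    set π' : Measure (X × X) := (π.prod κ).map f with hπ'
    have hfst : π'.map Prod.fst = mconv μ κ := by
      rw [hπ', Measure.map_map measurable_fst mf]
      have : (Prod.fst ∘ f) = (fun q : X × X => q.1 + q.2) ∘ Prod.map Prod.fst id := by
        funext q; rfl
      rw [this, ← Measure.map_map (g := fun q : X × X => q.1 + q.2) (measurable_fst.add measurable_snd)
        (measurable_fst.prodMap measurable_id),
        ← Measure.map_prod_map _ _ measurable_fst measurable_id, hπ1,
        Measure.map_id, mconv]
    have hsnd : π'.map Prod.snd = mconv ν κ := by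
      rw [hπ', Measure.map_map measurable_snd mf]
      have : (Prod.snd ∘ f) = (fun q : X × X => q.1 + q.2) ∘ Prod.map Prod.snd id := by
        funext q; rfl
      rw [this, ← Measure.map_map (g := fun q : X × X => q.1 + q.2) (measurable_fst.add measurable_snd)
        (measurable_snd.prodMap measurable_id),
        ← Measure.map_prod_map _ _ measurable_snd measurable_id, hπ2,
        Measure.map_id, mconv]
    refine le_trans (iInf₂_le π' ⟨hfst, hsnd⟩) (le_of_eq ?_)
    rw [hπ', lintegral_map mc2 mf]
    have : ∀ q : (X × X) × X, c (f q).1 (f q).2 = c q.1.1 q.1.2 := fun q => hinv _ _ _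
    simp only [this]
    rw [← lintegral_map mc2 measurable_fst, Measure.map_fst_prod]
    simp
  · -- part 2
    set g : X × X → X × X := fun q => (q.1, q.1 + q.2) with hg
    have mg : Measurable g := measurable_fst.prodMk (measurable_fst.add measurable_snd)
    set π' : Measure (X × X) := (μ.prod κ).map g with hπ'
    have hfst : π'.map Prod.fst = μ := by
      rw [hπ', Measure.map_map measurable_fst mg]
      have : (Prod.fst ∘ g) = Prod.fst := rfl
      rw [this, Measure.map_fst_prod]
      simp
    have hsnd : π'.map Prod.snd = mconv μ κ := by
      rw [hπ', Measure.map_map measurable_snd mg]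
      rfl
    refine le_trans (iInf₂_le π' ⟨hfst, hsnd⟩) (le_of_eq ?_)
    rw [hπ', lintegral_map mc2 mg]
    have : ∀ q : X × X, c (g q).1 (g q).2 = h q.2 := by
      intro q
      rw [hg]
      simp only
      rw [hch]
      rw [show q.1 - (q.1 + q.2) = -q.2 by abel, hneg]
    simp only [this]
    rw [← lintegral_map mh measurable_snd, Measure.map_snd_prod]
    simp
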